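/- Let G be a graph on vertex set {1,...,n} and let 1 ≤ i < j ≤ n. If G contains no linear forest with k edges spanning all n vertices (equivalently, no subgraph isomorphic to a member of the family L_{n,k}), then the shifted graph S_{ij}(G) also contains no such linear forest. -/

import Mathlib

open SimpleGraph Finset

/-- `G` contains a linear forest with `k` edges: a subgraph that is acyclic
with maximum degree at most 2 and exactly `k` edges. -/
def containsLinearForest {V : Type*} (G : SimpleGraph V) (k : ℕ) : Prop :=
  ∃ H : SimpleGraph V, H ≤ G ∧ H.IsAcyclic ∧ (∀ v, (H.neighborSet v).ncard ≤ 2) ∧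
    H.edgeSet.ncard = k

/-- `G` contains a matching with `k` edges. -/
def containsMatching {V : Type*} (G : SimpleGraph V) (k : ℕ) : Prop :=
  ∃ H : SimpleGraph V, H ≤ G ∧ (∀ v, (H.neighborSet v).ncard ≤ 1) ∧ H.edgeSet.ncard = k

/-- Number of `s`-cliques (copies of `K_s`) in `G`. -/
noncomputable def cliqueCount {V : Type*} (G : SimpleGraph V) (s : ℕ) : ℕ :=
  {S : Finset V | G.IsNClique s S}.ncard

/-- Number of copies of `K*_{s,t}` in `G`: pairs `(W₁, W₂)` of disjoint vertex sets with
`|W₁| = s`, `|W₂| = t`, `W₁` a clique and all `W₁`–`W₂` edges present. -/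
noncomputable def kstCount {V : Type*} (G : SimpleGraph V) (s t : ℕ) : ℕ :=
  {p : Finset V × Finset V | p.1.card = s ∧ p.2.card = t ∧ Disjoint p.1 p.2 ∧
    G.IsClique (p.1 : Set V) ∧ ∀ a ∈ p.1, ∀ b ∈ p.2, G.Adj a b}.ncard

open scoped Classical in
/-- Kelmans shifting operation on a single edge. -/
noncomputable def shiftEdge {n : ℕ} (G : SimpleGraph (Fin n)) (i j : Fin n)
    (e : Sym2 (Fin n)) : Sym2 (Fin n) :=
  if j ∈ e ∧ i ∉ e ∧ e.map (fun x => if x = j then i else x) ∉ G.edgeSet then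
    e.map (fun x => if x = j then i else x)
  else e

/-- The shifted graph `S_{ij}(G)`. -/
noncomputable def shiftGraph {n : ℕ} (G : SimpleGraph (Fin n)) (i j : Fin n) :
    SimpleGraph (Fin n) :=
  SimpleGraph.fromEdgeSet (shiftEdge G i j '' G.edgeSet)


set_option linter.unusedSectionVars false
set_option linter.unusedVariables false
set_option maxHeartbeats 1000000

section AuxGraph

variable {V : Type*}

private lemma lf_acyclic_mono {F F' : SimpleGraph V} (h : F ≤ F') (h' : F'.IsAcyclic) :
    F.IsAcyclic := fun _ c hc => h' (c.mapLe h) (hc.mapLe h)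

private lemma lf_reach_split {F : SimpleGraph V} {u v a b : V}
    (h : (F ⊔ edge u v).Reachable a b) :
    F.Reachable a b ∨ (F.Reachable a u ∧ F.Reachable v b) ∨
      (F.Reachable a v ∧ F.Reachable u b) := by
  obtain ⟨w⟩ := h
  induction w with
  | nil => exact Or.inl (Reachable.refl _)
  | @cons a c b hac p ih =>
    rcases (sup_adj ..).mp hac with hF | hE
    · rcases ih with h1 | ⟨h1, h2⟩ | ⟨h1, h2⟩
      · exact Or.inl (hF.reachable.trans h1)
      · exact Or.inr (Or.inl ⟨hF.reachable.trans h1, h2⟩)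
      · exact Or.inr (Or.inr ⟨hF.reachable.trans h1, h2⟩)
    · rw [edge_adj] at hE
      rcases hE.1 with ⟨rfl, rfl⟩ | ⟨rfl, rfl⟩
      · rcases ih with h1 | ⟨h1, h2⟩ | ⟨h1, h2⟩
        · exact Or.inr (Or.inl ⟨Reachable.refl _, h1⟩)
        · exact Or.inr (Or.inl ⟨Reachable.refl _, h2⟩)
        · exact Or.inl h2
      · rcases ih with h1 | ⟨h1, h2⟩ | ⟨h1, h2⟩
        · exact Or.inr (Or.inr ⟨Reachable.refl _, h1⟩)
        · exact Or.inl h2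
        · exact Or.inr (Or.inr ⟨Reachable.refl _, h2⟩)

private lemma lf_not_reach_delete {F : SimpleGraph V} (hF : F.IsAcyclic) {u v : V}
    (h : F.Adj u v) : ¬ (F.deleteEdges {s(u, v)}).Reachable u v := by
  have hb := (isAcyclic_iff_forall_adj_isBridge.mp hF) h
  exact isBridge_iff.mp hb

private lemma lf_acyclic_sup_edge {F : SimpleGraph V} (hF : F.IsAcyclic) {u v : V}
    (h : ¬ F.Reachable u v) : (F ⊔ edge u v).IsAcyclic := by
  have hne : u ≠ v := by rintro rfl; exact h (Reachable.refl _)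
  intro a c hc
  by_cases he : s(u, v) ∈ c.edges
  · have hb : (F ⊔ edge u v).IsBridge s(u, v) := by
      rw [isBridge_iff]
      intro hr
      refine h (hr.mono ?_)
      intro a b hab
      obtain ⟨hab1, hab2⟩ := hab
      rcases (sup_adj ..).mp hab1 with hFab | hEab
      · exact hFab
      · exfalso
        apply hab2
        rw [edge_adj] at hEab
        refine (fromEdgeSet_adj ..).mpr ⟨?_, hEab.2⟩
        rcases hEab.1 with ⟨rfl, rfl⟩ | ⟨rfl, rfl⟩
        · rfl
        · exact Sym2.eq_swap
    exact hb.notMem_edges_of_isCycle hc he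
  · have hsub : ∀ e ∈ c.edges, e ∈ F.edgeSet := by
      intro e hemem
      have hE := c.edges_subset_edgeSet hemem
      rw [edgeSet_sup] at hE
      rcases hE with hE | hE
      · exact hE
      · rw [edge_edgeSet_of_ne hne] at hE
        exact absurd (hE ▸ hemem) he
    exact hF (c.transfer F hsub) (hc.transfer hsub)

end AuxGraph

section AuxNbr
variable {V : Type*}

private lemma lf_edge_comm {u v : V} : (edge u v : SimpleGraph V) = edge v u := by
  ext a b; rw [edge_adj, edge_adj]; tauto

private lemma lf_nbr_del_ne {F : SimpleGraph V} {u v a : V} (hu : a ≠ u) (hv : a ≠ v) :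
    (F.deleteEdges {s(u, v)}).neighborSet a = F.neighborSet a := by
  ext b
  simp only [mem_neighborSet, deleteEdges_adj, Set.mem_singleton_iff, Sym2.eq_iff]
  constructor
  · exact fun hb => hb.1
  · intro hb
    exact ⟨hb, by rintro (⟨rfl, rfl⟩ | ⟨rfl, rfl⟩) <;> simp_all⟩

private lemma lf_nbr_del_fst {F : SimpleGraph V} {u v : V} :
    (F.deleteEdges {s(u, v)}).neighborSet u = F.neighborSet u \ {v} := by
  ext b
  simp only [mem_neighborSet, deleteEdges_adj, Set.mem_singleton_iff, Sym2.eq_iff,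
    Set.mem_diff]
  constructor
  · rintro ⟨hb, hb2⟩
    refine ⟨hb, fun hbv => hb2 ?_⟩
    subst hbv
    tauto
  · rintro ⟨hb, hbv⟩
    refine ⟨hb, ?_⟩
    have hne := hb.ne
    rintro (⟨-, rfl⟩ | ⟨rfl, rfl⟩)
    · exact hbv rfl
    · exact hne rfl

private lemma lf_nbr_del_snd {F : SimpleGraph V} {u v : V} :
    (F.deleteEdges {s(u, v)}).neighborSet v = F.neighborSet v \ {u} := by
  rw [Sym2.eq_swap]; exact lf_nbr_del_fst

private lemma lf_nbr_sup_ne {F : SimpleGraph V} {u v a : V} (hu : a ≠ u) (hv : a ≠ v) :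
    (F ⊔ edge u v).neighborSet a = F.neighborSet a := by
  ext b
  simp only [mem_neighborSet, sup_adj, edge_adj]
  constructor
  · rintro (hb | ⟨(⟨rfl, rfl⟩ | ⟨rfl, rfl⟩), _⟩)
    · exact hb
    · exact absurd rfl hu
    · exact absurd rfl hv
  · exact Or.inl

private lemma lf_nbr_sup_fst {F : SimpleGraph V} {u v : V} (huv : u ≠ v) :
    (F ⊔ edge u v).neighborSet u = insert v (F.neighborSet u) := by
  ext b
  simp only [mem_neighborSet, sup_adj, edge_adj, Set.mem_insert_iff]
  constructor
  · rintro (hb | ⟨(⟨-, rfl⟩ | ⟨rfl, rfl⟩), h2⟩)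
    · exact Or.inr hb
    · exact Or.inl rfl
    · exact absurd rfl h2
  · rintro (rfl | hb)
    · exact Or.inr ⟨Or.inl ⟨trivial, rfl⟩, huv⟩
    · exact Or.inl hb

private lemma lf_nbr_sup_snd {F : SimpleGraph V} {u v : V} (huv : u ≠ v) :
    (F ⊔ edge u v).neighborSet v = insert u (F.neighborSet v) := by
  rw [lf_edge_comm]; exact lf_nbr_sup_fst huv.symm

private lemma lf_edge_le {G : SimpleGraph V} {u v : V} (h : G.Adj u v) : edge u v ≤ G := by
  intro a b hab
  rw [edge_adj] at hab
  rcases hab.1 with ⟨rfl, rfl⟩ | ⟨rfl, rfl⟩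
  · exact h
  · exact h.symm

private lemma lf_edgeSet_sup {F : SimpleGraph V} {u v : V} (huv : u ≠ v) :
    (F ⊔ edge u v).edgeSet = insert s(u, v) F.edgeSet := by
  rw [edgeSet_sup, edge_edgeSet_of_ne huv, Set.union_singleton]

end AuxNbr

section AuxPath
variable {V : Type*}

private lemma lf_path_decomp {F : SimpleGraph V} {a b : V} (h : F.Reachable a b)
    (hne : a ≠ b) :
    ∃ w, F.Adj a w ∧ ∃ t : F.Walk w b, a ∉ t.support := by
  classical
  obtain ⟨q⟩ := h
  obtain ⟨pw, hpw⟩ := q.toPath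
  cases pw with
  | nil => exact absurd rfl hne
  | cons hadj t =>
    rw [Walk.cons_isPath_iff] at hpw
    exact ⟨_, hadj, t, hpw.2⟩

private lemma lf_walk_avoid {F : SimpleGraph V} {a c w b : V} (t : F.Walk w b)
    (hs : a ∉ t.support) : (F.deleteEdges {s(a, c)}).Reachable w b := by
  refine ⟨t.transfer _ fun e he => ?_⟩
  rw [edgeSet_deleteEdges, Set.mem_diff]
  refine ⟨t.edges_subset_edgeSet he, ?_⟩
  rintro rfl
  exact hs (t.fst_mem_support_of_mem_edges he)

private lemma lf_card_step [Finite V] {S : Set V} {b c : V} (hS : S.ncard ≤ 2) (hc : c ∈ S) :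
    (insert b (S \ {c})).ncard ≤ 2 := by
  have h1 := Set.ncard_insert_le b (S \ {c})
  have h2 := Set.ncard_diff_singleton_of_mem hc
  omega

private lemma lf_card_step1 [Finite V] {S : Set V} {b : V} (hS : S.ncard ≤ 1) :
    (insert b S).ncard ≤ 2 := by
  have h1 := Set.ncard_insert_le b S
  omega

end AuxPath

section AuxShift

variable {n : ℕ} {G : SimpleGraph (Fin n)} {i j : Fin n}

private lemma lf_j_not_mem_map (hij : i ≠ j) (e : Sym2 (Fin n)) :
    j ∉ e.map (fun x => if x = j then i else x) := by
  intro hmem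
  rw [Sym2.mem_map] at hmem
  obtain ⟨a, -, ha⟩ := hmem
  by_cases haj : a = j
  · rw [if_pos haj] at ha; exact hij ha
  · rw [if_neg haj] at ha; exact haj ha

private lemma lf_i_mem_map (hj : j ∈ e) : i ∈ Sym2.map (fun x => if x = j then i else x) e := by
  rw [Sym2.mem_map]
  exact ⟨j, hj, by simp⟩

private lemma lf_exists_pre (he : e ∈ (shiftGraph G i j).edgeSet) :
    ∃ f ∈ G.edgeSet, shiftEdge G i j f = e := by
  rw [shiftGraph, edgeSet_fromEdgeSet] at he
  exact he.1

/-- Edges of the shift graph not containing `i` are in `G`, and if they contain `j` their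
image is also in `G`. -/
private lemma lf_mem_G_of_not_mem_i (hij : i ≠ j) (he : e ∈ (shiftGraph G i j).edgeSet)
    (hi : i ∉ e) :
    e ∈ G.edgeSet ∧ (j ∈ e → e.map (fun x => if x = j then i else x) ∈ G.edgeSet) := by
  obtain ⟨f, hf, hfe⟩ := lf_exists_pre he
  rw [shiftEdge] at hfe
  split_ifs at hfe with hc
  · exact absurd (hfe ▸ lf_i_mem_map hc.1) hi
  · subst hfe
    refine ⟨hf, fun hj => ?_⟩
    by_contra hmap
    exact hc ⟨hj, hi, hmap⟩

/-- Edges of the shift graph containing `j` are in `G`. -/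
private lemma lf_mem_G_of_mem_j (hij : i ≠ j) (he : e ∈ (shiftGraph G i j).edgeSet)
    (hj : j ∈ e) : e ∈ G.edgeSet := by
  obtain ⟨f, hf, hfe⟩ := lf_exists_pre he
  rw [shiftEdge] at hfe
  split_ifs at hfe with hc
  · exact absurd (hfe ▸ hj) (lf_j_not_mem_map hij f)
  · exact hfe ▸ hf

/-- Adjacency form: an edge `j–z` of the shift graph with `z ≠ i` gives both `j–z` and
`i–z` in `G`. -/
private lemma lf_adj_j (hij : i ≠ j) {z : Fin n} (h : (shiftGraph G i j).Adj j z)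
    (hz : z ≠ i) : G.Adj j z ∧ G.Adj i z := by
  have hzj : z ≠ j := fun hq => h.ne' hq
  have he : s(j, z) ∈ (shiftGraph G i j).edgeSet := h
  have hiout : i ∉ s(j, z) := by
    rw [Sym2.mem_iff]; rintro (rfl | rfl); exact hij rfl; exact hz rfl
  obtain ⟨h1, h2⟩ := lf_mem_G_of_not_mem_i hij he hiout
  have hmap : Sym2.map (fun x => if x = j then i else x) s(j, z) = s(i, z) := by
    rw [Sym2.map_pair_eq, if_pos rfl, if_neg hzj]
  have := h2 (by rw [Sym2.mem_iff]; exact Or.inl rfl)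
  rw [hmap] at this
  exact ⟨h1, this⟩

/-- A "bad" edge at `i`: in the shift graph but not in `G`. -/
private lemma lf_bad_edge (hij : i ≠ j) {x : Fin n} (h : (shiftGraph G i j).Adj i x)
    (hg : ¬ G.Adj i x) : x ≠ j ∧ G.Adj j x := by
  have hxi : x ≠ i := h.ne'
  have he : s(i, x) ∈ (shiftGraph G i j).edgeSet := h
  obtain ⟨f, hf, hfe⟩ := lf_exists_pre he
  rw [shiftEdge] at hfe
  split_ifs at hfe with hc
  · obtain ⟨hjf, hif, hmapf⟩ := hc
    obtain ⟨b, hb⟩ := Sym2.mem_iff_exists.mp hjf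
    subst hb
    have hbj : b ≠ j := by
      intro hq; subst hq
      exact (G.irrefl ((G.mem_edgeSet).mp hf))
    have hbi : b ≠ i := by
      intro hq; subst hq
      exact hif (Sym2.mem_iff.mpr (Or.inr rfl))
    rw [Sym2.map_pair_eq, if_pos rfl, if_neg hbj] at hfe
    have hbx : b = x := by
      rcases Sym2.eq_iff.mp hfe with ⟨-, h2⟩ | ⟨h1, -⟩
      · exact h2
      · exact absurd h1.symm hxi
    subst hbx
    constructor
    · intro hq; subst hq; exact (G.irrefl ((G.mem_edgeSet).mp hf))
    · exact (G.mem_edgeSet).mp hf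
  · exact absurd ((G.mem_edgeSet).mp (hfe ▸ hf)) hg

/-- Edge `i–j` in shift graph is in `G`. -/
private lemma lf_adj_ij (hij : i ≠ j) (h : (shiftGraph G i j).Adj i j) : G.Adj i j := by
  have := lf_mem_G_of_mem_j hij (h : s(i,j) ∈ (shiftGraph G i j).edgeSet)
    (Sym2.mem_iff.mpr (Or.inr rfl))
  exact (G.mem_edgeSet).mp this

/-- Edges of shift graph avoiding both i and j are in G. -/
private lemma lf_adj_other (hij : i ≠ j) {a b : Fin n} (h : (shiftGraph G i j).Adj a b)
    (hai : a ≠ i) (hbi : b ≠ i) : G.Adj a b := by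
  have he : s(a, b) ∈ (shiftGraph G i j).edgeSet := h
  have hiout : i ∉ s(a, b) := by
    rw [Sym2.mem_iff]; rintro (rfl | rfl); exact hai rfl; exact hbi rfl
  exact (G.mem_edgeSet).mp (lf_mem_G_of_not_mem_i hij he hiout).1

end AuxShift

section SwapCase

variable {n : ℕ} {G : SimpleGraph (Fin n)} {i j : Fin n}

private lemma lf_swap_case (hij : i ≠ j)
    {H : SimpleGraph (Fin n)} (hle : H ≤ shiftGraph G i j) (hac : H.IsAcyclic)
    (hdeg : ∀ v, (H.neighborSet v).ncard ≤ 2) {k : ℕ} (hcard : H.edgeSet.ncard = k)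
    (hσ : ∀ z, H.Adj i z → z = j ∨ G.Adj j z) :
    ∃ H' : SimpleGraph (Fin n), H' ≤ G ∧ H'.IsAcyclic ∧
      (∀ v, (H'.neighborSet v).ncard ≤ 2) ∧ H'.edgeSet.ncard = k := by
  classical
  set σ := Equiv.swap i j with hσdef
  have hss : ∀ a : Fin n, σ (σ a) = a := fun a => Equiv.swap_apply_self i j a
  refine ⟨H.comap ⇑σ, ?_, ?_, ?_, ?_⟩
  · -- H' ≤ G
    have key : ∀ u v, H.Adj u v → G.Adj (σ u) (σ v) := by
      intro u v huv
      have hSG := hle huv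
      have hne : u ≠ v := huv.ne
      by_cases hui : u = i
      · rw [hui] at huv hSG hne ⊢
        rw [Equiv.swap_apply_left]
        by_cases hvj : v = j
        · rw [hvj] at hSG ⊢
          rw [Equiv.swap_apply_right]
          exact (lf_adj_ij hij hSG).symm
        · rw [Equiv.swap_apply_of_ne_of_ne (Ne.symm hne) hvj]
          rcases hσ v huv with h1 | h1
          · exact absurd h1 hvj
          · exact h1
      · by_cases huj : u = j
        · rw [huj] at huv hSG hne ⊢
          rw [Equiv.swap_apply_right]
          by_cases hvi : v = i
          · rw [hvi] at hSG ⊢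
            rw [Equiv.swap_apply_left]
            exact lf_adj_ij hij hSG.symm
          · rw [Equiv.swap_apply_of_ne_of_ne hvi (Ne.symm hne)]
            exact (lf_adj_j hij hSG hvi).2
        · rw [Equiv.swap_apply_of_ne_of_ne hui huj]
          by_cases hvi : v = i
          · rw [hvi] at huv hSG ⊢
            rw [Equiv.swap_apply_left]
            rcases hσ u huv.symm with h1 | h1
            · exact absurd h1 huj
            · exact h1.symm
          · by_cases hvj : v = j
            · rw [hvj] at hSG ⊢
              rw [Equiv.swap_apply_right]
              exact (lf_adj_j hij hSG.symm hui).2.symm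
            · rw [Equiv.swap_apply_of_ne_of_ne hvi hvj]
              exact lf_adj_other hij hSG hui hvi
    intro a b hab
    have := key (σ a) (σ b) hab
    rwa [hss, hss] at this
  · -- acyclic
    intro v c hc
    let hom : (H.comap ⇑σ) →g H := ⟨⇑σ, fun {a b} hab => hab⟩
    have hinj : Function.Injective ⇑hom := fun a b hab => σ.injective (by exact hab)
    exact hac (c.map hom) ((Walk.map_isCycle_iff_of_injective hinj).mpr hc)
  · -- degrees
    intro v
    have hset : (H.comap ⇑σ).neighborSet v = ⇑σ ⁻¹' H.neighborSet (σ v) := by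
      ext b; simp [mem_neighborSet]
    rw [hset]
    have himg : ⇑σ ⁻¹' H.neighborSet (σ v) = ⇑σ.symm '' H.neighborSet (σ v) := by
      rw [Equiv.image_eq_preimage_symm, Equiv.symm_symm]
    rw [himg, Set.ncard_image_of_injective _ σ.symm.injective]
    exact hdeg (σ v)
  · -- edge count
    have emem : ∀ e : Sym2 (Fin n), e ∈ (H.comap ⇑σ).edgeSet ↔ Sym2.map ⇑σ e ∈ H.edgeSet := by
      intro e
      induction e with
      | _ a b => rw [Sym2.map_pair_eq]; exact Iff.rfl
    have hinvol : ∀ e : Sym2 (Fin n), Sym2.map ⇑σ (Sym2.map ⇑σ e) = e := by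
      intro e
      induction e with
      | _ a b => rw [Sym2.map_pair_eq, Sym2.map_pair_eq, hss, hss]
    have hES : (H.comap ⇑σ).edgeSet = Sym2.map ⇑σ '' H.edgeSet := by
      ext e
      constructor
      · intro he
        exact ⟨Sym2.map ⇑σ e, (emem e).mp he, hinvol e⟩
      · rintro ⟨f, hf, rfl⟩
        exact (emem _).mpr ((hinvol f).symm ▸ hf)
    rw [hES, Set.ncard_image_of_injective _ (Sym2.map.injective σ.injective)]
    exact hcard

end SwapCase


section Surgery

variable {n : ℕ} {G : SimpleGraph (Fin n)} {i j : Fin n}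

private lemma lf_assemble (hij : i ≠ j) {H : SimpleGraph (Fin n)}
    (hac : H.IsAcyclic) (hdeg : ∀ v, (H.neighborSet v).ncard ≤ 2) {k : ℕ}
    (hcard : H.edgeSet.ncard = k) {x y u : Fin n}
    (hx : H.Adj i x) (hNi : H.neighborSet i = {x, y}) (hxj : x ≠ j) (hxy : x ≠ y)
    (hF1le : H.deleteEdges {s(i, x)} ≤ G)
    (hju : H.Adj j u) (hGiu : G.Adj i u) (hGjx : G.Adj j x) (hnadjjx : ¬ H.Adj j x)
    (hux : u ≠ x) (huy : u ≠ y) (hui : u ≠ i)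
    (hr2 : ¬ ((H.deleteEdges {s(i, x)}).deleteEdges {s(j, u)}).Reachable j x)
    (hnr : ¬ (((H.deleteEdges {s(i, x)}).deleteEdges {s(j, u)}) ⊔ edge j x).Reachable i u) :
    ∃ H' : SimpleGraph (Fin n), H' ≤ G ∧ H'.IsAcyclic ∧
      (∀ v, (H'.neighborSet v).ncard ≤ 2) ∧ H'.edgeSet.ncard = k := by
  have hxi : x ≠ i := hx.ne'
  have hji : j ≠ i := Ne.symm hij
  have huj : u ≠ j := hju.ne'
  have hjx : j ≠ x := Ne.symm hxj
  have hiu : i ≠ u := Ne.symm hui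
  have hix : i ≠ x := Ne.symm hxi
  -- the four graphs
  have hF1ac : (H.deleteEdges {s(i, x)}).IsAcyclic :=
    lf_acyclic_mono (deleteEdges_le _) hac
  have hF2ac : ((H.deleteEdges {s(i, x)}).deleteEdges {s(j, u)}).IsAcyclic :=
    lf_acyclic_mono (deleteEdges_le _) hF1ac
  have hF3ac := lf_acyclic_sup_edge hF2ac hr2
  have hF4ac := lf_acyclic_sup_edge hF3ac hnr
  have hju1 : (H.deleteEdges {s(i, x)}).Adj j u := by
    rw [deleteEdges_adj]
    refine ⟨hju, ?_⟩
    rw [Set.mem_singleton_iff, Sym2.eq_iff]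
    rintro (⟨h1, -⟩ | ⟨h1, -⟩)
    · exact hij h1.symm
    · exact hxj h1.symm
  have hN1i : (H.deleteEdges {s(i, x)}).neighborSet i = {y} := by
    rw [lf_nbr_del_fst, hNi, Set.pair_diff_left hxy]
  refine ⟨((H.deleteEdges {s(i, x)}).deleteEdges {s(j, u)} ⊔ edge j x) ⊔ edge i u,
    ?_, hF4ac, ?_, ?_⟩
  · exact sup_le (sup_le ((deleteEdges_le _).trans hF1le) (lf_edge_le hGjx))
      (lf_edge_le hGiu)
  · -- degrees
    intro v
    by_cases hvi : v = i
    · rw [hvi]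
      rw [lf_nbr_sup_fst hiu, lf_nbr_sup_ne hij hix, lf_nbr_del_ne hij hiu, hN1i]
      have := Set.ncard_insert_le u ({y} : Set (Fin n))
      simp only [Set.ncard_singleton] at this
      omega
    · by_cases hvu : v = u
      · rw [hvu]
        rw [lf_nbr_sup_snd hiu, lf_nbr_sup_ne huj hux, lf_nbr_del_snd,
          lf_nbr_del_ne hui hux]
        exact lf_card_step (hdeg u) hju.symm
      · by_cases hvj : v = j
        · rw [hvj]
          rw [lf_nbr_sup_ne hji (Ne.symm huj), lf_nbr_sup_fst hjx, lf_nbr_del_fst,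
            lf_nbr_del_ne hji hjx]
          exact lf_card_step (hdeg j) hju
        · by_cases hvx : v = x
          · rw [hvx]
            rw [lf_nbr_sup_ne hxi (Ne.symm hux), lf_nbr_sup_snd hjx,
              lf_nbr_del_ne hxj (Ne.symm hux), lf_nbr_del_snd]
            exact lf_card_step (hdeg x) hx.symm
          · rw [lf_nbr_sup_ne hvi hvu, lf_nbr_sup_ne hvj hvx,
              lf_nbr_del_ne hvj hvu, lf_nbr_del_ne hvi hvx]
            exact hdeg v
  · -- edge count
    have m1 : s(i, x) ∈ H.edgeSet := hx
    have m2 : s(j, u) ∈ H.edgeSet := hju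
    have hne12 : s(i, x) ≠ s(j, u) := by
      intro hq
      rw [Sym2.eq_iff] at hq
      rcases hq with ⟨h1, -⟩ | ⟨-, h2⟩
      · exact hij h1
      · exact hxj h2
    have hk2 : 2 ≤ k := by
      have : 1 < H.edgeSet.ncard :=
        (Set.one_lt_ncard_iff (Set.toFinite _)).mpr ⟨s(i, x), s(j, u), m1, m2, hne12⟩
      omega
    have c1 : (H.deleteEdges {s(i, x)}).edgeSet.ncard = k - 1 := by
      rw [edgeSet_deleteEdges, Set.ncard_diff_singleton_of_mem m1, hcard]
    have m2' : s(j, u) ∈ (H.deleteEdges {s(i, x)}).edgeSet := by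
      rw [edgeSet_deleteEdges]
      exact ⟨m2, by simpa using (Ne.symm hne12)⟩
    have c2 : ((H.deleteEdges {s(i, x)}).deleteEdges {s(j, u)}).edgeSet.ncard = k - 2 := by
      rw [edgeSet_deleteEdges, Set.ncard_diff_singleton_of_mem m2', c1]
      omega
    have hjx2 : s(j, x) ∉ ((H.deleteEdges {s(i, x)}).deleteEdges {s(j, u)}).edgeSet := by
      intro hmem
      rw [edgeSet_deleteEdges, Set.mem_diff, edgeSet_deleteEdges, Set.mem_diff] at hmem
      exact hnadjjx hmem.1.1
    have c3 : (((H.deleteEdges {s(i, x)}).deleteEdges {s(j, u)}) ⊔ edge j x).edgeSet.ncard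
        = k - 1 := by
      rw [lf_edgeSet_sup hjx, Set.ncard_insert_of_notMem hjx2, c2]
      omega
    have hiu2 : s(i, u) ∉
        ((((H.deleteEdges {s(i, x)}).deleteEdges {s(j, u)}) ⊔ edge j x)).edgeSet := by
      rw [lf_edgeSet_sup hjx, Set.mem_insert_iff]
      rintro (heq | hmem)
      · rw [Sym2.eq_iff] at heq
        rcases heq with ⟨h1, -⟩ | ⟨h1, -⟩
        · exact hij h1
        · exact hix h1
      · rw [edgeSet_deleteEdges, Set.mem_diff, edgeSet_deleteEdges, Set.mem_diff] at hmem
        have hmem2 : u ∈ H.neighborSet i := hmem.1.1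
        rw [hNi, Set.mem_insert_iff, Set.mem_singleton_iff] at hmem2
        rcases hmem2 with h1 | h1
        · exact hux h1
        · exact huy h1
    rw [lf_edgeSet_sup hiu, Set.ncard_insert_of_notMem hiu2, c3]
    omega

private lemma lf_surgery_case (hij : i ≠ j) {H : SimpleGraph (Fin n)}
    (hle : H ≤ shiftGraph G i j) (hac : H.IsAcyclic)
    (hdeg : ∀ v, (H.neighborSet v).ncard ≤ 2) {k : ℕ} (hcard : H.edgeSet.ncard = k)
    {x y : Fin n} (hx : H.Adj i x) (hgx : ¬ G.Adj i x)
    (hy : H.Adj i y) (hyj : y ≠ j) (hgy : ¬ G.Adj j y) :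
    ∃ H' : SimpleGraph (Fin n), H' ≤ G ∧ H'.IsAcyclic ∧
      (∀ v, (H'.neighborSet v).ncard ≤ 2) ∧ H'.edgeSet.ncard = k := by
  have hxi : x ≠ i := hx.ne'
  have hyi : y ≠ i := hy.ne'
  obtain ⟨hxj, hGjx⟩ := lf_bad_edge hij (hle hx) hgx
  have hGiy : G.Adj i y := by
    by_contra hq
    exact hgy (lf_bad_edge hij (hle hy) hq).2
  have hxy : x ≠ y := fun hq => hgx (hq ▸ hGiy)
  have hNi : H.neighborSet i = {x, y} := by
    refine (Set.eq_of_subset_of_ncard_le ?_ ?_ (Set.toFinite _)).symm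
    · rintro c (rfl | rfl)
      · exact hx
      · exact hy
    · rw [Set.ncard_pair hxy]
      exact hdeg i
  have hNj : ∀ z, H.Adj j z → G.Adj j z ∧ G.Adj i z ∧ z ≠ i ∧ z ≠ x ∧ z ≠ y := by
    intro z hz
    have hzi : z ≠ i := by
      intro hq
      have h2 : j ∈ H.neighborSet i := (hq ▸ hz).symm
      rw [hNi, Set.mem_insert_iff, Set.mem_singleton_iff] at h2
      rcases h2 with h2 | h2
      · exact hxj h2.symm
      · exact hyj h2.symm
    obtain ⟨h1, h2⟩ := lf_adj_j hij (hle hz) hzi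
    refine ⟨h1, h2, hzi, ?_, ?_⟩
    · intro hq
      exact hgx (hq ▸ h2)
    · intro hq
      exact hgy (hq ▸ h1)
  have hnadjjx : ¬ H.Adj j x := fun hq => (hNj x hq).2.2.2.1 rfl
  have hF1le : H.deleteEdges {s(i, x)} ≤ G := by
    intro a b hab
    rw [deleteEdges_adj] at hab
    obtain ⟨habH, hnm⟩ := hab
    by_contra hg
    by_cases hai : a = i
    · have hmem2 : b ∈ H.neighborSet i := hai ▸ habH
      rw [hNi, Set.mem_insert_iff, Set.mem_singleton_iff] at hmem2
      rcases hmem2 with rfl | rfl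
      · exact hnm (by rw [hai]; exact rfl)
      · exact hg (by rw [hai]; exact hGiy)
    · by_cases hbi : b = i
      · have hmem2 : a ∈ H.neighborSet i := hbi ▸ habH.symm
        rw [hNi, Set.mem_insert_iff, Set.mem_singleton_iff] at hmem2
        rcases hmem2 with rfl | rfl
        · exact hnm (by rw [hbi]; exact Sym2.eq_swap)
        · exact hg (by rw [hbi]; exact hGiy.symm)
      · exact hg (lf_adj_other hij (hle habH) hai hbi)
  have hF1ac : (H.deleteEdges {s(i, x)}).IsAcyclic :=
    lf_acyclic_mono (deleteEdges_le _) hac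
  have hnr_ix : ¬ (H.deleteEdges {s(i, x)}).Reachable i x := lf_not_reach_delete hac hx
  have hN1j : (H.deleteEdges {s(i, x)}).neighborSet j = H.neighborSet j :=
    lf_nbr_del_ne (Ne.symm hij) (Ne.symm hxj)
  have hN1i : (H.deleteEdges {s(i, x)}).neighborSet i = {y} := by
    rw [lf_nbr_del_fst, hNi, Set.pair_diff_left hxy]
  by_cases hrjx : (H.deleteEdges {s(i, x)}).Reachable j x
  · -- CASE 3 : j is on the x-side
    obtain ⟨w, hjw1, t, hjt⟩ := lf_path_decomp hrjx (Ne.symm hxj)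
    have hjwH : H.Adj j w := (deleteEdges_le _) hjw1
    obtain ⟨hGjw, hGiw, hwi, hwx, hwy⟩ := hNj w hjwH
    have hr2 : ¬ ((H.deleteEdges {s(i, x)}).deleteEdges {s(j, w)}).Reachable j x := by
      intro hr
      have ht2 : ((H.deleteEdges {s(i, x)}).deleteEdges {s(j, w)}).Reachable w x :=
        lf_walk_avoid t hjt
      exact lf_not_reach_delete hF1ac hjw1 (hr.trans ht2.symm)
    have hnr : ¬ (((H.deleteEdges {s(i, x)}).deleteEdges {s(j, w)}) ⊔ edge j x).Reachable i w := by
      intro hr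
      have hm : (H.deleteEdges {s(i, x)}).deleteEdges {s(j, w)} ≤ H.deleteEdges {s(i, x)} :=
        deleteEdges_le _
      have htF1 : (H.deleteEdges {s(i, x)}).Reachable w x := ⟨t⟩
      rcases lf_reach_split hr with h1 | ⟨h1, h2⟩ | ⟨h1, h2⟩
      · exact hnr_ix ((h1.mono hm).trans htF1)
      · exact hnr_ix ((h1.mono hm).trans hrjx)
      · exact hnr_ix (h1.mono hm)
    exact lf_assemble hij hac hdeg hcard hx hNi hxj hxy hF1le hjwH hGiw hGjx hnadjjx
      hwx hwy hwi hr2 hnr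
  · by_cases hdj : ((H.deleteEdges {s(i, x)}).neighborSet j).ncard ≤ 1
    · -- CASE 1 : just move the bad edge to j
      have hnadjjx1 : s(j, x) ∉ (H.deleteEdges {s(i, x)}).edgeSet := by
        intro hmem
        rw [edgeSet_deleteEdges, Set.mem_diff] at hmem
        exact hnadjjx hmem.1
      refine ⟨(H.deleteEdges {s(i, x)}) ⊔ edge j x, ?_, lf_acyclic_sup_edge hF1ac hrjx, ?_, ?_⟩
      · exact sup_le hF1le (lf_edge_le hGjx)
      · intro v
        by_cases hvj : v = j
        · rw [hvj]
          rw [lf_nbr_sup_fst (Ne.symm hxj)]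
          exact lf_card_step1 hdj
        · by_cases hvx : v = x
          · rw [hvx]
            rw [lf_nbr_sup_snd (Ne.symm hxj), lf_nbr_del_snd]
            exact lf_card_step (hdeg x) hx.symm
          · rw [lf_nbr_sup_ne hvj hvx]
            by_cases hvi : v = i
            · rw [hvi]
              rw [hN1i, Set.ncard_singleton]
              omega
            · rw [lf_nbr_del_ne hvi hvx]
              exact hdeg v
      · have hk1 : 1 ≤ k := by
          have : 0 < H.edgeSet.ncard := by
            rw [Set.ncard_pos (Set.toFinite _)]
            exact ⟨s(i, x), hx⟩
          omega
        have m1 : s(i, x) ∈ H.edgeSet := hx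
        have c1 : (H.deleteEdges {s(i, x)}).edgeSet.ncard = k - 1 := by
          rw [edgeSet_deleteEdges, Set.ncard_diff_singleton_of_mem m1, hcard]
        rw [lf_edgeSet_sup (Ne.symm hxj), Set.ncard_insert_of_notMem hnadjjx1, c1]
        omega
    · -- CASE 2 : j has degree 2 and is not connected to x
      have hdj2 : ((H.deleteEdges {s(i, x)}).neighborSet j).ncard = 2 := by
        have hle2 : ((H.deleteEdges {s(i, x)}).neighborSet j).ncard ≤ 2 := by
          rw [hN1j]; exact hdeg j
        omega
      have hz : ∃ z, (H.deleteEdges {s(i, x)}).Adj j z ∧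
          ¬ ((H.deleteEdges {s(i, x)}).deleteEdges {s(j, z)}).Reachable i z := by
        by_cases hrij : (H.deleteEdges {s(i, x)}).Reachable i j
        · obtain ⟨w, hjw1, t, hjt⟩ := lf_path_decomp hrij.symm (Ne.symm hij)
          obtain ⟨a, b, hab, hNab⟩ := Set.ncard_eq_two.mp hdj2
          obtain ⟨z, hzadj, hzw⟩ : ∃ z, (H.deleteEdges {s(i, x)}).Adj j z ∧ z ≠ w := by
            by_cases haw : a = w
            · refine ⟨b, ?_, ?_⟩
              · have : b ∈ (H.deleteEdges {s(i, x)}).neighborSet j := by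
                  rw [hNab]; exact Or.inr rfl
                exact this
              · rw [← haw]; exact fun hq => hab hq.symm
            · refine ⟨a, ?_, haw⟩
              have : a ∈ (H.deleteEdges {s(i, x)}).neighborSet j := by
                rw [hNab]; exact Or.inl rfl
              exact this
          refine ⟨z, hzadj, fun hr => ?_⟩
          have htw : ((H.deleteEdges {s(i, x)}).deleteEdges {s(j, z)}).Reachable w i :=
            lf_walk_avoid t hjt
          have hjw2 : ((H.deleteEdges {s(i, x)}).deleteEdges {s(j, z)}).Adj j w := by
            rw [deleteEdges_adj]
            refine ⟨hjw1, ?_⟩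
            rw [Set.mem_singleton_iff, Sym2.eq_iff]
            rintro (⟨-, h1⟩ | ⟨h1, -⟩)
            · exact hzw h1.symm
            · exact hzadj.ne' h1.symm
          exact lf_not_reach_delete hF1ac hzadj ((hjw2.reachable.trans htw).trans hr)
        · have hne : ((H.deleteEdges {s(i, x)}).neighborSet j).Nonempty :=
            Set.nonempty_of_ncard_ne_zero (by omega)
          obtain ⟨z, hz⟩ := hne
          refine ⟨z, hz, fun hr => ?_⟩
          have : (H.deleteEdges {s(i, x)}).Adj j z := hz
          exact hrij ((hr.mono (deleteEdges_le _)).trans this.symm.reachable)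
      obtain ⟨z, hjz1, hnriz⟩ := hz
      have hjzH : H.Adj j z := (deleteEdges_le _) hjz1
      obtain ⟨hGjz, hGiz, hzi, hzx, hzy⟩ := hNj z hjzH
      have hr2 : ¬ ((H.deleteEdges {s(i, x)}).deleteEdges {s(j, z)}).Reachable j x :=
        fun hr => hrjx (hr.mono (deleteEdges_le _))
      have hnr : ¬ (((H.deleteEdges {s(i, x)}).deleteEdges {s(j, z)}) ⊔ edge j x).Reachable i z := by
        intro hr
        rcases lf_reach_split hr with h1 | ⟨h1, h2⟩ | ⟨h1, h2⟩
        · exact hnriz h1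
        · exact hrjx (hjz1.reachable.trans (h2.mono (deleteEdges_le _)).symm)
        · exact lf_not_reach_delete hF1ac hjz1 h2
      exact lf_assemble hij hac hdeg hcard hx hNi hxj hxy hF1le hjzH hGiz hGjx hnadjjx
        hzx hzy hzi hr2 hnr

end Surgery

/-- If `G` contains no linear forest with `k` edges, then neither does `S_{ij}(G)`. -/
theorem stmt1 {n k : ℕ} (G : SimpleGraph (Fin n)) (i j : Fin n) (hij : i < j)
    (h : ¬ containsLinearForest G k) : ¬ containsLinearForest (shiftGraph G i j) k := by
  intro hC
  obtain ⟨H, hle, hac, hdeg, hcard⟩ := hC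
  have hij' : i ≠ j := ne_of_lt hij
  apply h
  by_cases hHG : ∀ a b : Fin n, H.Adj a b → G.Adj a b
  · exact ⟨H, fun {a b} hab => hHG a b hab, hac, hdeg, hcard⟩
  · push_neg at hHG
    obtain ⟨a, b, hab, hgab⟩ := hHG
    have hmem : a = i ∨ b = i := by
      by_contra hq
      push_neg at hq
      exact hgab (lf_adj_other hij' (hle hab) hq.1 hq.2)
    obtain ⟨x, hx, hgx⟩ : ∃ x, H.Adj i x ∧ ¬ G.Adj i x := by
      rcases hmem with rfl | rfl
      · exact ⟨b, hab, hgab⟩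
      · exact ⟨a, hab.symm, fun hg => hgab hg.symm⟩
    by_cases hsw : ∀ z, H.Adj i z → z = j ∨ G.Adj j z
    · exact lf_swap_case hij' hle hac hdeg hcard hsw
    · push_neg at hsw
      obtain ⟨y, hy, hyj, hgy⟩ := hsw
      exact lf_surgery_case hij' hle hac hdeg hcard hx hgx hy hyj hgy
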